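/- arXiv:2602.04303 — 4 statements merged into one kernel-verified Lean document; each statement's English description precedes it below -/
import Mathlib

section
/- For all real numbers α with 0 < α ≤ 1 (here β in (0,1]) and 0 < y < x, if a < 0 then |y^a - x^a| / (x - y)^β ≤ C · y^(a-β), and if a ≥ 0 then |y^a - x^a| / (x - y)^β ≤ C · x^(a-β), for some constant C depending only on a and β. -/
open Real

private lemma mvt_rpow (a : ℝ) {y x : ℝ} (hy : 0 < y) (hxy : y < x) :
    ∃ c ∈ Set.Ioo y x, x ^ a - y ^ a = a * c ^ (a - 1) * (x - y) := by
  obtain ⟨c, hc, hceq⟩ := exists_hasDerivAt_eq_slope (fun t => t ^ a)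
    (fun t => a * t ^ (a - 1)) hxy
    (fun t ht => (Real.continuousAt_rpow_const t a
      (Or.inl (ne_of_gt (lt_of_lt_of_le hy ht.1)))).continuousWithinAt)
    (fun t ht => Real.hasDerivAt_rpow_const (Or.inl (ne_of_gt (hy.trans ht.1))))
  refine ⟨c, hc, ?_⟩
  have hxy' : x - y ≠ 0 := by linarith
  field_simp at hceq
  linarith

theorem stmt_0 (a β : ℝ) (hβ0 : 0 < β) (hβ1 : β ≤ 1) :
    ∃ C : ℝ, 0 < C ∧ ∀ x y : ℝ, 0 < y → y < x →
      ((a < 0 → |y ^ a - x ^ a| / (x - y) ^ β ≤ C * y ^ (a - β)) ∧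
       (0 ≤ a → |y ^ a - x ^ a| / (x - y) ^ β ≤ C * x ^ (a - β))) := by
  refine ⟨2 * |a| + 2, by positivity, fun x y hy hxy => ?_⟩
  have hx : 0 < x := hy.trans hxy
  have hd : 0 < x - y := by linarith
  have hdβ : 0 < (x - y) ^ β := Real.rpow_pos_of_pos hd β
  obtain ⟨c, hc, hceq⟩ := mvt_rpow a hy hxy
  have hcpos : 0 < c := hy.trans hc.1
  constructor
  · intro ha
    rw [div_le_iff₀ hdβ]
    rcases le_or_gt (x - y) y with hsmall | hbig
    · -- MVT bound
      have h1 : c ^ (a - 1) ≤ y ^ (a - 1) :=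
        Real.rpow_le_rpow_of_nonpos hy hc.1.le (by linarith)
      have h2 : x - y ≤ y ^ (1 - β) * (x - y) ^ β := by
        have : (x - y) ^ (1 - β) ≤ y ^ (1 - β) :=
          Real.rpow_le_rpow hd.le hsmall (by linarith)
        calc x - y = (x - y) ^ (1 - β) * (x - y) ^ β := by
              rw [← Real.rpow_add hd]; norm_num
          _ ≤ y ^ (1 - β) * (x - y) ^ β := by
              exact mul_le_mul_of_nonneg_right this hdβ.le
      have habs : |y ^ a - x ^ a| = |a| * c ^ (a - 1) * (x - y) := by
        rw [abs_sub_comm, hceq, abs_mul, abs_mul, abs_of_pos hd,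
          abs_of_pos (Real.rpow_pos_of_pos hcpos _)]
      calc |y ^ a - x ^ a| = |a| * c ^ (a - 1) * (x - y) := habs
        _ ≤ |a| * y ^ (a - 1) * (y ^ (1 - β) * (x - y) ^ β) := by
            apply mul_le_mul (mul_le_mul_of_nonneg_left h1 (abs_nonneg a)) h2 hd.le
            positivity
        _ = |a| * (y ^ (a - β) * (x - y) ^ β) := by
            rw [mul_assoc, ← mul_assoc (y ^ (a - 1)), ← Real.rpow_add hy]
            ring_nf
        _ ≤ (2 * |a| + 2) * y ^ (a - β) * (x - y) ^ β := by
            rw [← mul_assoc]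
            apply mul_le_mul_of_nonneg_right _ hdβ.le
            apply mul_le_mul_of_nonneg_right _ (Real.rpow_pos_of_pos hy _).le
            linarith [abs_nonneg a]
    · -- x - y > y, trivial bound
      have hxa : x ^ a ≤ y ^ a := Real.rpow_le_rpow_of_nonpos hy hxy.le ha.le
      have hxapos : 0 < x ^ a := Real.rpow_pos_of_pos hx a
      have habs : |y ^ a - x ^ a| ≤ y ^ a := by
        rw [abs_of_nonneg (by linarith)]; linarith
      calc |y ^ a - x ^ a| ≤ y ^ a := habs
        _ = y ^ (a - β) * y ^ β := by rw [← Real.rpow_add hy]; ring_nf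
        _ ≤ y ^ (a - β) * (x - y) ^ β := by
            exact mul_le_mul_of_nonneg_left
              (Real.rpow_le_rpow hy.le hbig.le hβ0.le)
              (Real.rpow_pos_of_pos hy _).le
        _ ≤ (2 * |a| + 2) * y ^ (a - β) * (x - y) ^ β := by
            rw [mul_assoc]
            apply le_mul_of_one_le_left _ (by linarith [abs_nonneg a])
            positivity
  · intro ha
    rw [div_le_iff₀ hdβ]
    rcases le_or_gt x (2 * y) with hsmall | hbig
    · -- MVT bound: c ≥ y ≥ x/2
      have hc2 : x / 2 ≤ c := by nlinarith [hc.1]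
      have h1 : c ^ (a - 1) ≤ 2 * x ^ (a - 1) := by
        rcases le_or_gt 1 a with h1a | h1a
        · have : c ^ (a - 1) ≤ x ^ (a - 1) :=
            Real.rpow_le_rpow hcpos.le hc.2.le (by linarith)
          nlinarith [Real.rpow_pos_of_pos hx (a - 1)]
        · have h2 : c ^ (a - 1) ≤ (x / 2) ^ (a - 1) :=
            Real.rpow_le_rpow_of_nonpos (by linarith) hc2 (by linarith)
          have h3 : (x / 2) ^ (a - 1) = (2 : ℝ) ^ (1 - a) * x ^ (a - 1) := by
            rw [div_eq_mul_inv, Real.mul_rpow hx.le (by norm_num),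
              ← Real.rpow_neg_one (2 : ℝ), ← Real.rpow_mul (by norm_num),
              show (-1 : ℝ) * (a - 1) = 1 - a by ring]
            ring
          have h4 : (2 : ℝ) ^ (1 - a) ≤ 2 := by
            calc (2 : ℝ) ^ (1 - a) ≤ (2 : ℝ) ^ (1 : ℝ) :=
                Real.rpow_le_rpow_of_exponent_le (by norm_num) (by linarith)
              _ = 2 := Real.rpow_one 2
          calc c ^ (a - 1) ≤ (2 : ℝ) ^ (1 - a) * x ^ (a - 1) := h3 ▸ h2
            _ ≤ 2 * x ^ (a - 1) :=
              mul_le_mul_of_nonneg_right h4 (Real.rpow_pos_of_pos hx _).le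
      have h2 : x - y ≤ x ^ (1 - β) * (x - y) ^ β := by
        have : (x - y) ^ (1 - β) ≤ x ^ (1 - β) :=
          Real.rpow_le_rpow hd.le (by linarith) (by linarith)
        calc x - y = (x - y) ^ (1 - β) * (x - y) ^ β := by
              rw [← Real.rpow_add hd]; norm_num
          _ ≤ x ^ (1 - β) * (x - y) ^ β := mul_le_mul_of_nonneg_right this hdβ.le
      have habs : |y ^ a - x ^ a| = |a| * c ^ (a - 1) * (x - y) := by
        rw [abs_sub_comm, hceq, abs_mul, abs_mul, abs_of_pos hd,
          abs_of_pos (Real.rpow_pos_of_pos hcpos _)]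
      calc |y ^ a - x ^ a| = |a| * c ^ (a - 1) * (x - y) := habs
        _ ≤ |a| * (2 * x ^ (a - 1)) * (x ^ (1 - β) * (x - y) ^ β) := by
            apply mul_le_mul (mul_le_mul_of_nonneg_left h1 (abs_nonneg a)) h2 hd.le
            positivity
        _ = 2 * |a| * (x ^ (a - β) * (x - y) ^ β) := by
            rw [show |a| * (2 * x ^ (a - 1)) * (x ^ (1 - β) * (x - y) ^ β)
              = 2 * |a| * ((x ^ (a - 1) * x ^ (1 - β)) * (x - y) ^ β) by ring,
              ← Real.rpow_add hx]
            ring_nf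
        _ ≤ (2 * |a| + 2) * x ^ (a - β) * (x - y) ^ β := by
            rw [← mul_assoc]
            apply mul_le_mul_of_nonneg_right _ hdβ.le
            apply mul_le_mul_of_nonneg_right _ (Real.rpow_pos_of_pos hx _).le
            linarith
    · -- x > 2y : trivial bound
      have hxb : x ^ β ≤ 2 * (x - y) ^ β := by
        have h1 : x ^ β ≤ (2 * (x - y)) ^ β :=
          Real.rpow_le_rpow hx.le (by linarith) hβ0.le
        have h2 : (2 * (x - y)) ^ β = 2 ^ β * (x - y) ^ β :=
          Real.mul_rpow (by norm_num) hd.le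
        have h3 : (2 : ℝ) ^ β ≤ 2 := by
          calc (2 : ℝ) ^ β ≤ (2 : ℝ) ^ (1 : ℝ) :=
              Real.rpow_le_rpow_of_exponent_le (by norm_num) hβ1
            _ = 2 := Real.rpow_one 2
        calc x ^ β ≤ 2 ^ β * (x - y) ^ β := h2 ▸ h1
          _ ≤ 2 * (x - y) ^ β := mul_le_mul_of_nonneg_right h3 hdβ.le
      have hya : y ^ a ≤ x ^ a := Real.rpow_le_rpow hy.le hxy.le ha
      have hyapos : 0 < y ^ a := Real.rpow_pos_of_pos hy a
      have habs : |y ^ a - x ^ a| ≤ x ^ a := by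
        rw [abs_sub_comm, abs_of_nonneg (by linarith)]; linarith
      calc |y ^ a - x ^ a| ≤ x ^ a := habs
        _ = x ^ (a - β) * x ^ β := by rw [← Real.rpow_add hx]; ring_nf
        _ ≤ x ^ (a - β) * (2 * (x - y) ^ β) :=
            mul_le_mul_of_nonneg_left hxb (Real.rpow_pos_of_pos hx _).le
        _ ≤ (2 * |a| + 2) * x ^ (a - β) * (x - y) ^ β := by
            rw [show x ^ (a - β) * (2 * (x - y) ^ β) = 2 * x ^ (a - β) * (x - y) ^ β by ring]
            apply mul_le_mul_of_nonneg_right _ hdβ.le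
            apply mul_le_mul_of_nonneg_right _ (Real.rpow_pos_of_pos hx _).le
            linarith [abs_nonneg a]
end

section
/- Let 0 < s < t, β > 0, 0 < γ ≤ min(β, 1), and γ < α + 1 with α < 0. Then ∫_s^t r^(-β) (t - r)^α dr ≤ C · s^(γ-β) · (t - s)^(α+1-γ), where C depends only on α, β, γ. -/
open Real intervalIntegral MeasureTheory

theorem stmt_1 (α β γ : ℝ) (hβ : 0 < β) (hγ0 : 0 < γ) (hγβ : γ ≤ min β 1)
    (hγα : γ < α + 1) (hα : α < 0) :
    ∃ C : ℝ, 0 < C ∧ ∀ s t : ℝ, 0 < s → s < t →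
      ∫ r in s..t, r ^ (-β) * (t - r) ^ α ≤
        C * s ^ (γ - β) * (t - s) ^ (α + 1 - γ) := by
  have hγ1 : γ < 1 := lt_of_lt_of_le (lt_of_lt_of_le hγα (by linarith)) le_rfl
  have hα1 : -1 < α := by linarith
  have hγβ' : γ ≤ β := hγβ.trans (min_le_left _ _)
  have h1γ : (0:ℝ) < 1 - γ := by linarith
  have hα1' : (0:ℝ) < α + 1 := by linarith
  have hC1 : (0:ℝ) < 1/(1-γ) + 1/(α+1) :=
    add_pos (one_div_pos.mpr h1γ) (one_div_pos.mpr hα1')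
  refine ⟨(2:ℝ) ^ (γ - α - 1) * (1/(1-γ) + 1/(α+1)),
    mul_pos (rpow_pos_of_pos two_pos _) hC1, ?_⟩
  intro s t hs hst
  set m : ℝ := (s + t) / 2 with hm
  have hsm : s < m := by simp only [hm]; linarith
  have hmt : m < t := by simp only [hm]; linarith
  have hms : m - s = (t - s) / 2 := by simp only [hm]; ring
  have htm : t - m = (t - s) / 2 := by simp only [hm]; ring
  have hd : (0:ℝ) < (t - s) / 2 := by linarith
  -- integrability on [s, m]
  have c1 : ContinuousOn (fun r : ℝ => r ^ (-β) * (t - r) ^ α) (Set.uIcc s m) := by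
    rw [Set.uIcc_of_le hsm.le]
    apply ContinuousOn.mul
    · exact continuousOn_id.rpow_const fun x hx => Or.inl (ne_of_gt (lt_of_lt_of_le hs hx.1))
    · exact (continuousOn_const.sub continuousOn_id).rpow_const fun x hx =>
        Or.inl (ne_of_gt (by have := hx.2; show (0:ℝ) < t - x; linarith))
  have hi1 : IntervalIntegrable (fun r : ℝ => r ^ (-β) * (t - r) ^ α) volume s m :=
    c1.intervalIntegrable
  -- integrability on [m, t]
  have g2 : IntervalIntegrable (fun r : ℝ => (t - r) ^ α) volume m t := by
    have := (intervalIntegrable_rpow' (a := t - m) (b := 0) hα1).comp_sub_left t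
    simpa using this
  have hi2 : IntervalIntegrable (fun r : ℝ => r ^ (-β) * (t - r) ^ α) volume m t := by
    apply g2.continuousOn_mul
    rw [Set.uIcc_of_le hmt.le]
    exact continuousOn_id.rpow_const fun x hx =>
      Or.inl (ne_of_gt (lt_of_lt_of_le (hs.trans hsm) hx.1))
  -- integrable bounds
  have gb1 : IntervalIntegrable (fun r : ℝ =>
      s ^ (γ - β) * ((t - s)/2) ^ α * (r - s) ^ (-γ)) volume s m := by
    apply IntervalIntegrable.const_mul
    have := (intervalIntegrable_rpow' (a := 0) (b := m - s) (r := -γ)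
      (by linarith)).comp_sub_right s
    simpa using this
  have gb2 : IntervalIntegrable (fun r : ℝ =>
      s ^ (γ - β) * ((t - s)/2) ^ (-γ) * (t - r) ^ α) volume m t :=
    g2.const_mul _
  -- pointwise bound on (s, m]
  have hb1 : ∀ r ∈ Set.Ioc s m, r ^ (-β) * (t - r) ^ α ≤
      s ^ (γ - β) * ((t - s)/2) ^ α * (r - s) ^ (-γ) := by
    intro r hr
    have hr0 : 0 < r := hs.trans hr.1
    have h1 : r ^ (γ - β) ≤ s ^ (γ - β) :=
      rpow_le_rpow_of_nonpos hs hr.1.le (by linarith)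
    have h2 : r ^ (-γ) ≤ (r - s) ^ (-γ) :=
      rpow_le_rpow_of_nonpos (by linarith [hr.1]) (by linarith) (by linarith)
    have h3 : (t - r) ^ α ≤ ((t - s)/2) ^ α :=
      rpow_le_rpow_of_nonpos hd (by have := hr.2; simp only [hm] at this ⊢; linarith) hα.le
    have heq : r ^ (-β) = r ^ (γ - β) * r ^ (-γ) := by
      rw [← rpow_add hr0]; ring_nf
    rw [heq]
    calc r ^ (γ - β) * r ^ (-γ) * (t - r) ^ α
        ≤ s ^ (γ - β) * (r - s) ^ (-γ) * ((t - s)/2) ^ α := by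
          apply mul_le_mul (mul_le_mul h1 h2 (rpow_nonneg hr0.le _) (rpow_nonneg hs.le _))
            h3 (rpow_nonneg (by have := hr.2; simp only [hm] at this; linarith) _)
            (mul_nonneg (rpow_nonneg hs.le _) (rpow_nonneg (by linarith [hr.1]) _))
      _ = s ^ (γ - β) * ((t - s)/2) ^ α * (r - s) ^ (-γ) := by ring
  -- pointwise bound on (m, t]
  have hb2 : ∀ r ∈ Set.Ioc m t, r ^ (-β) * (t - r) ^ α ≤
      s ^ (γ - β) * ((t - s)/2) ^ (-γ) * (t - r) ^ α := by
    intro r hr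
    have hr0 : 0 < r := hs.trans (hsm.trans hr.1)
    have h1 : r ^ (γ - β) ≤ s ^ (γ - β) :=
      rpow_le_rpow_of_nonpos hs (hsm.le.trans hr.1.le) (by linarith)
    have h2 : r ^ (-γ) ≤ ((t - s)/2) ^ (-γ) := by
      apply rpow_le_rpow_of_nonpos hd _ (by linarith)
      have := hr.1; simp only [hm] at this; linarith
    have heq : r ^ (-β) = r ^ (γ - β) * r ^ (-γ) := by
      rw [← rpow_add hr0]; ring_nf
    rw [heq]
    exact mul_le_mul (mul_le_mul h1 h2 (rpow_nonneg hr0.le _) (rpow_nonneg hs.le _))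
      le_rfl (rpow_nonneg (by linarith [hr.2]) _)
      (mul_nonneg (rpow_nonneg hs.le _) (rpow_nonneg hd.le _))
  -- integral inequality piece 1
  have hA : (∫ r in s..m, r ^ (-β) * (t - r) ^ α) ≤
      s ^ (γ - β) * ((t - s)/2) ^ α * (((t - s)/2) ^ (1 - γ) / (1 - γ)) := by
    have step1 : (∫ r in s..m, r ^ (-β) * (t - r) ^ α) ≤
        ∫ r in s..m, s ^ (γ - β) * ((t - s)/2) ^ α * (r - s) ^ (-γ) := by
      rw [integral_of_le hsm.le, integral_of_le hsm.le]
      exact setIntegral_mono_on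
        ((intervalIntegrable_iff_integrableOn_Ioc_of_le hsm.le).mp hi1)
        ((intervalIntegrable_iff_integrableOn_Ioc_of_le hsm.le).mp gb1)
        measurableSet_Ioc hb1
    have step2 : (∫ r in s..m, s ^ (γ - β) * ((t - s)/2) ^ α * (r - s) ^ (-γ)) =
        s ^ (γ - β) * ((t - s)/2) ^ α * (((t - s)/2) ^ (1 - γ) / (1 - γ)) := by
      rw [intervalIntegral.integral_const_mul]
      congr 1
      rw [integral_comp_sub_right (fun u : ℝ => u ^ (-γ)) s, sub_self,
        integral_rpow (Or.inl (by linarith)), hms,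
        Real.zero_rpow (by intro h; rw [show -γ + 1 = 1 - γ by ring] at h; nlinarith)]
      rw [show -γ + 1 = 1 - γ by ring]
      ring
    linarith [step1, step2.le, step2.ge]
  -- integral inequality piece 2
  have hB : (∫ r in m..t, r ^ (-β) * (t - r) ^ α) ≤
      s ^ (γ - β) * ((t - s)/2) ^ (-γ) * (((t - s)/2) ^ (α + 1) / (α + 1)) := by
    have step1 : (∫ r in m..t, r ^ (-β) * (t - r) ^ α) ≤
        ∫ r in m..t, s ^ (γ - β) * ((t - s)/2) ^ (-γ) * (t - r) ^ α := by
      rw [integral_of_le hmt.le, integral_of_le hmt.le]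
      exact setIntegral_mono_on
        ((intervalIntegrable_iff_integrableOn_Ioc_of_le hmt.le).mp hi2)
        ((intervalIntegrable_iff_integrableOn_Ioc_of_le hmt.le).mp gb2)
        measurableSet_Ioc hb2
    have step2 : (∫ r in m..t, s ^ (γ - β) * ((t - s)/2) ^ (-γ) * (t - r) ^ α) =
        s ^ (γ - β) * ((t - s)/2) ^ (-γ) * (((t - s)/2) ^ (α + 1) / (α + 1)) := by
      rw [intervalIntegral.integral_const_mul]
      congr 1
      rw [integral_comp_sub_left (fun u : ℝ => u ^ α) t, sub_self,
        integral_rpow (Or.inl hα1), htm,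
        Real.zero_rpow hα1'.ne']
      ring
    linarith [step1, step2.le]
  -- combine
  have hsplit : (∫ r in s..t, r ^ (-β) * (t - r) ^ α) =
      (∫ r in s..m, r ^ (-β) * (t - r) ^ α) + ∫ r in m..t, r ^ (-β) * (t - r) ^ α :=
    (integral_add_adjacent_intervals hi1 hi2).symm
  have hfin : s ^ (γ - β) * ((t - s)/2) ^ α * (((t - s)/2) ^ (1 - γ) / (1 - γ)) +
      s ^ (γ - β) * ((t - s)/2) ^ (-γ) * (((t - s)/2) ^ (α + 1) / (α + 1)) =
      (2:ℝ) ^ (γ - α - 1) * (1/(1-γ) + 1/(α+1)) * s ^ (γ - β) * (t - s) ^ (α + 1 - γ) := by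
    have e1 : ((t - s)/2) ^ α * ((t - s)/2) ^ (1 - γ) = ((t - s)/2) ^ (α + 1 - γ) := by
      rw [← rpow_add hd]; ring_nf
    have e2 : ((t - s)/2) ^ (-γ) * ((t - s)/2) ^ (α + 1) = ((t - s)/2) ^ (α + 1 - γ) := by
      rw [← rpow_add hd]; ring_nf
    have e3 : ((t - s)/2) ^ (α + 1 - γ) =
        (t - s) ^ (α + 1 - γ) * (2:ℝ) ^ (γ - α - 1) := by
      rw [div_rpow (by linarith) (by norm_num), div_eq_mul_inv, ← rpow_neg (by norm_num)]
      ring_nf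
    calc s ^ (γ - β) * ((t - s)/2) ^ α * (((t - s)/2) ^ (1 - γ) / (1 - γ)) +
        s ^ (γ - β) * ((t - s)/2) ^ (-γ) * (((t - s)/2) ^ (α + 1) / (α + 1))
        = s ^ (γ - β) * (((t - s)/2) ^ α * ((t - s)/2) ^ (1 - γ)) * (1/(1 - γ)) +
          s ^ (γ - β) * (((t - s)/2) ^ (-γ) * ((t - s)/2) ^ (α + 1)) * (1/(α + 1)) := by
          ring
      _ = s ^ (γ - β) * ((t - s)/2) ^ (α + 1 - γ) * (1/(1-γ) + 1/(α+1)) := by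
          rw [e1, e2]; ring
      _ = (2:ℝ) ^ (γ - α - 1) * (1/(1-γ) + 1/(α+1)) * s ^ (γ - β) * (t - s) ^ (α + 1 - γ) := by
          rw [e3]; ring
  rw [hsplit, ← hfin]
  exact add_le_add hA hB
end

section
/- For every m ≥ 1 and positive reals α_1, …, α_m, and s_0 < s_{m+1}, the iterated integral over the simplex {s_0 < s_1 < ⋯ < s_m < s_{m+1}} of ∏_{j=1}^m (s_j - s_{j-1})^{α_j - 1} ds_1 ⋯ ds_m equals (s_{m+1} - s_0)^{∑_j α_j} · (∏_{j=1}^m Γ(α_j)) / Γ(∑_{j=1}^m α_j + 1). -/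
open Real MeasureTheory Finset intervalIntegral

lemma betaIntegrable01 {p q : ℝ} (hp : 0 < p) (hq : 0 < q) :
    IntervalIntegrable (fun x : ℝ => x ^ (p - 1) * (1 - x) ^ (q - 1)) volume 0 1 := by
  have h := Complex.betaIntegral_convergent (u := p) (v := q) (by simpa using hp) (by simpa using hq)
  have h2 : IntervalIntegrable (fun x : ℝ => ((x : ℂ) ^ ((p : ℂ) - 1) * ((1 : ℂ) - x) ^ ((q : ℂ) - 1)).re)
      volume 0 1 := by
    rw [intervalIntegrable_iff] at h ⊢
    exact h.re
  apply h2.congr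
  intro x hx
  rw [Set.uIoc_of_le (by norm_num : (0:ℝ) ≤ 1)] at hx
  have hx0 : 0 ≤ x := hx.1.le
  have hx1 : 0 ≤ 1 - x := by linarith [hx.2]
  beta_reduce
  rw [show ((p : ℂ) - 1) = ((p - 1 : ℝ) : ℂ) by push_cast; ring,
    show ((q : ℂ) - 1) = ((q - 1 : ℝ) : ℂ) by push_cast; ring,
    show ((1 : ℂ) - (x:ℂ)) = ((1 - x : ℝ) : ℂ) by push_cast; ring,
    ← Complex.ofReal_cpow hx0, ← Complex.ofReal_cpow hx1, ← Complex.ofReal_mul,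
    Complex.ofReal_re]

lemma betaReal01 {p q : ℝ} (hp : 0 < p) (hq : 0 < q) :
    ∫ x in (0:ℝ)..1, x ^ (p - 1) * (1 - x) ^ (q - 1)
      = Real.Gamma p * Real.Gamma q / Real.Gamma (p + q) := by
  have key := Complex.Gamma_mul_Gamma_eq_betaIntegral (s := p) (t := q)
    (by simpa using hp) (by simpa using hq)
  have hcast : Complex.betaIntegral p q
      = ((∫ x in (0:ℝ)..1, x ^ (p - 1) * (1 - x) ^ (q - 1) : ℝ) : ℂ) := by
    rw [Complex.betaIntegral, ← intervalIntegral.integral_ofReal]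
    refine intervalIntegral.integral_congr_ae (MeasureTheory.ae_of_all _ fun x hx => ?_)
    rw [Set.uIoc_of_le (by norm_num : (0:ℝ) ≤ 1)] at hx
    have hx0 : 0 ≤ x := hx.1.le
    have hx1 : 0 ≤ 1 - x := by linarith [hx.2]
    rw [show ((p : ℂ) - 1) = ((p - 1 : ℝ) : ℂ) by push_cast; ring,
      show ((q : ℂ) - 1) = ((q - 1 : ℝ) : ℂ) by push_cast; ring,
      show ((1 : ℂ) - (x:ℂ)) = ((1 - x : ℝ) : ℂ) by push_cast; ring,
      ← Complex.ofReal_cpow hx0, ← Complex.ofReal_cpow hx1, ← Complex.ofReal_mul]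
  have hΓ : Real.Gamma (p + q) ≠ 0 := (Real.Gamma_pos_of_pos (by linarith)).ne'
  have : ((Real.Gamma p * Real.Gamma q : ℝ) : ℂ)
      = ((Real.Gamma (p + q) : ℝ) : ℂ) * ((∫ x in (0:ℝ)..1, x ^ (p - 1) * (1 - x) ^ (q - 1) : ℝ) : ℂ) := by
    push_cast
    rw [← Complex.Gamma_ofReal, ← Complex.Gamma_ofReal, ← Complex.Gamma_ofReal] at *
    push_cast at key ⊢
    rw [key, hcast]
  rw [← Complex.ofReal_mul] at this
  have h2 := Complex.ofReal_injective this
  field_simp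
  linarith [h2]

lemma betaIntegrableScaled {p q : ℝ} (hp : 0 < p) (hq : 0 < q) {c d : ℝ} (hcd : c < d) :
    IntervalIntegrable (fun t : ℝ => (t - c) ^ (p - 1) * (d - t) ^ (q - 1)) volume c d := by
  set e := (c + d) / 2
  have hce : c < e := by simp only [e]; linarith
  have hed : e < d := by simp only [e]; linarith
  have h1 : IntervalIntegrable (fun t : ℝ => (t - c) ^ (p - 1) * (d - t) ^ (q - 1)) volume c e := by
    have hi : IntervalIntegrable (fun t : ℝ => (t - c) ^ (p - 1)) volume c e := by
      have := (intervalIntegrable_rpow' (a := 0) (b := e - c) (r := p - 1) (by linarith)).comp_sub_right c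
      simpa using this
    apply hi.mul_continuousOn
    apply ContinuousOn.rpow_const (by fun_prop)
    intro t ht
    rw [Set.uIcc_of_le hce.le] at ht
    left; exact (by linarith [ht.2] : (0:ℝ) < d - t).ne'
  have h2 : IntervalIntegrable (fun t : ℝ => (t - c) ^ (p - 1) * (d - t) ^ (q - 1)) volume e d := by
    have hi : IntervalIntegrable (fun t : ℝ => (d - t) ^ (q - 1)) volume e d := by
      have := (intervalIntegrable_rpow' (a := d - e) (b := 0) (r := q - 1) (by linarith)).comp_sub_left d
      simpa using this
    apply hi.continuousOn_mul
    apply ContinuousOn.rpow_const (by fun_prop)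
    intro t ht
    rw [Set.uIcc_of_le hed.le] at ht
    left; exact (by linarith [ht.1] : (0:ℝ) < t - c).ne'
  exact h1.trans h2

lemma betaScaled {p q : ℝ} (hp : 0 < p) (hq : 0 < q) {c d : ℝ} (hcd : c < d) :
    ∫ t in c..d, (t - c) ^ (p - 1) * (d - t) ^ (q - 1)
      = (d - c) ^ (p + q - 1) * (Real.Gamma p * Real.Gamma q / Real.Gamma (p + q)) := by
  set L := d - c with hL
  have hL0 : 0 < L := by simp [hL]; linarith
  have sub := intervalIntegral.integral_comp_add_mul (a := (0:ℝ)) (b := 1)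
    (fun t => (t - c) ^ (p - 1) * (d - t) ^ (q - 1)) hL0.ne' c
  have heq : ∫ x in (0:ℝ)..1, (fun t => (t - c) ^ (p - 1) * (d - t) ^ (q - 1)) (c + L * x)
      = L ^ (p - 1) * L ^ (q - 1) * ∫ x in (0:ℝ)..1, x ^ (p - 1) * (1 - x) ^ (q - 1) := by
    rw [← intervalIntegral.integral_const_mul]
    refine intervalIntegral.integral_congr_ae (MeasureTheory.ae_of_all _ fun x hx => ?_)
    rw [Set.uIoc_of_le (by norm_num : (0:ℝ) ≤ 1)] at hx
    have hx0 : 0 ≤ x := hx.1.le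
    have hx1 : 0 ≤ 1 - x := by linarith [hx.2]
    simp only
    rw [show c + L * x - c = L * x by ring, show d - (c + L * x) = L * (1 - x) by rw [hL]; ring,
      Real.mul_rpow hL0.le hx0, Real.mul_rpow hL0.le hx1]
    ring
  rw [show c + L * 0 = c by ring, show c + L * 1 = d by rw [hL]; ring] at sub
  have : ∫ t in c..d, (t - c) ^ (p - 1) * (d - t) ^ (q - 1)
      = L * (L ^ (p - 1) * L ^ (q - 1) * ∫ x in (0:ℝ)..1, x ^ (p - 1) * (1 - x) ^ (q - 1)) := by
    rw [← heq, sub, smul_eq_mul, ← mul_assoc, mul_inv_cancel₀ hL0.ne', one_mul]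
  rw [this, betaReal01 hp hq]
  rw [show L * (L ^ (p - 1) * L ^ (q - 1) * (Real.Gamma p * Real.Gamma q / Real.Gamma (p + q)))
      = (L ^ (1:ℝ) * L ^ (p - 1) * L ^ (q - 1)) * (Real.Gamma p * Real.Gamma q / Real.Gamma (p + q))
      by rw [Real.rpow_one]; ring,
    ← Real.rpow_add hL0, ← Real.rpow_add hL0]
  ring_nf

lemma betaLintegral {p q : ℝ} (hp : 0 < p) (hq : 0 < q) {c d : ℝ} (hcd : c < d) :
    ∫⁻ t in Set.Ioo c d, ENNReal.ofReal ((t - c) ^ (p - 1) * (d - t) ^ (q - 1))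
      = ENNReal.ofReal ((d - c) ^ (p + q - 1) * (Real.Gamma p * Real.Gamma q / Real.Gamma (p + q))) := by
  have hfi : MeasureTheory.Integrable (fun t : ℝ => (t - c) ^ (p - 1) * (d - t) ^ (q - 1))
      (volume.restrict (Set.Ioc c d)) :=
    (intervalIntegrable_iff_integrableOn_Ioc_of_le hcd.le).mp (betaIntegrableScaled hp hq hcd)
  have hnn : 0 ≤ᶠ[MeasureTheory.ae (volume.restrict (Set.Ioc c d))]
      fun t : ℝ => (t - c) ^ (p - 1) * (d - t) ^ (q - 1) := by
    filter_upwards [MeasureTheory.ae_restrict_mem measurableSet_Ioc] with t ht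
    exact mul_nonneg (Real.rpow_nonneg (by linarith [ht.1]) _)
      (Real.rpow_nonneg (by linarith [ht.2]) _)
  calc ∫⁻ t in Set.Ioo c d, ENNReal.ofReal ((t - c) ^ (p - 1) * (d - t) ^ (q - 1))
      = ∫⁻ t in Set.Ioc c d, ENNReal.ofReal ((t - c) ^ (p - 1) * (d - t) ^ (q - 1)) :=
        MeasureTheory.setLIntegral_congr MeasureTheory.Ioo_ae_eq_Ioc
    _ = ENNReal.ofReal (∫ t in Set.Ioc c d, (t - c) ^ (p - 1) * (d - t) ^ (q - 1)) :=
        (MeasureTheory.ofReal_integral_eq_lintegral_ofReal hfi hnn).symm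
    _ = ENNReal.ofReal ((d - c) ^ (p + q - 1) * (Real.Gamma p * Real.Gamma q / Real.Gamma (p + q))) := by
        rw [← intervalIntegral.integral_of_le hcd.le, betaScaled hp hq hcd]

open scoped ENNReal

lemma meas_rpow_const {δ : Type*} [MeasurableSpace δ] {f : δ → ℝ} (hf : Measurable f) (c : ℝ) :
    Measurable fun x => f x ^ c := by measurability

/-- The previous coordinate: `prevCoord a x j` is `x (j-1)` for `j > 0` and `a` for `j = 0`. -/
noncomputable def prevCoord {m : ℕ} (a : ℝ) (x : Fin m → ℝ) (j : Fin m) : ℝ :=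
  if h : 0 < j.val then x ⟨j.val - 1, lt_of_le_of_lt (Nat.sub_le _ _) j.isLt⟩ else a

/-- The last coordinate, or `a` if there are no coordinates. -/
noncomputable def lastC (m : ℕ) (a : ℝ) (x : Fin m → ℝ) : ℝ :=
  if h : 0 < m then x ⟨m - 1, Nat.sub_lt h one_pos⟩ else a

lemma snoc_lt_apply {m : ℕ} (y : Fin m → ℝ) (t : ℝ) (i : Fin (m+1)) (hi : i.val < m) :
    (Fin.snoc y t : Fin (m+1) → ℝ) i = y ⟨i.val, hi⟩ := by
  simp [Fin.snoc, hi]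
  rfl

lemma prevCoord_snoc_castSucc {m : ℕ} (a t : ℝ) (y : Fin m → ℝ) (j : Fin m) :
    prevCoord a (Fin.snoc y t) j.castSucc = prevCoord a y j := by
  unfold prevCoord
  rcases Nat.eq_zero_or_pos j.val with h | h
  · rw [dif_neg, dif_neg] <;> simp [h]
  · rw [dif_pos (by simpa using h), dif_pos h]
    exact snoc_lt_apply y t _ (lt_of_le_of_lt (Nat.sub_le _ _) j.isLt)

lemma prevCoord_snoc_last {m : ℕ} (a t : ℝ) (y : Fin m → ℝ) :
    prevCoord a (Fin.snoc y t) (Fin.last m) = lastC m a y := by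
  unfold prevCoord lastC
  rcases Nat.eq_zero_or_pos m with h | h
  · subst h; rw [dif_neg (by simp [Fin.last]), dif_neg (by simp)]
  · rw [dif_pos (by simpa [Fin.last] using h), dif_pos h]
    exact snoc_lt_apply y t _ (Nat.sub_lt h one_pos)

lemma lastC_snoc {m : ℕ} (a t : ℝ) (y : Fin m → ℝ) :
    lastC (m+1) a (Fin.snoc y t) = t := by
  rw [lastC, dif_pos (Nat.succ_pos m)]
  have h : (⟨m + 1 - 1, Nat.sub_lt (Nat.succ_pos m) one_pos⟩ : Fin (m+1)) = Fin.last m :=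
    Fin.ext (by simp)
  rw [h, Fin.snoc_last]

lemma cond_snoc {m : ℕ} (a t : ℝ) (y : Fin m → ℝ) :
    (∀ i : Fin (m+1), prevCoord a (Fin.snoc y t) i < (Fin.snoc y t : Fin (m+1) → ℝ) i)
      ↔ (∀ i : Fin m, prevCoord a y i < y i) ∧ lastC m a y < t := by
  constructor
  · intro h
    refine ⟨fun i => ?_, ?_⟩
    · have := h i.castSucc
      rwa [prevCoord_snoc_castSucc, Fin.snoc_castSucc] at this
    · have := h (Fin.last m)
      rwa [prevCoord_snoc_last, Fin.snoc_last] at this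
  · rintro ⟨h1, h2⟩ i
    refine Fin.lastCases ?_ (fun j => ?_) i
    · rw [prevCoord_snoc_last, Fin.snoc_last]; exact h2
    · rw [prevCoord_snoc_castSucc, Fin.snoc_castSucc]; exact h1 j

lemma prod_snoc {m : ℕ} (a t : ℝ) (α : Fin (m+1) → ℝ) (y : Fin m → ℝ) :
    ∏ j : Fin (m+1), ((Fin.snoc y t : Fin (m+1) → ℝ) j - prevCoord a (Fin.snoc y t) j) ^ (α j - 1)
      = (∏ j : Fin m, (y j - prevCoord a y j) ^ (α j.castSucc - 1))
        * (t - lastC m a y) ^ (α (Fin.last m) - 1) := by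
  rw [Fin.prod_univ_castSucc]
  congr 1
  · exact Finset.prod_congr rfl fun j _ => by
      rw [Fin.snoc_castSucc, prevCoord_snoc_castSucc]
  · rw [Fin.snoc_last, prevCoord_snoc_last]

lemma measurable_prevCoord {m : ℕ} (a : ℝ) (j : Fin m) :
    Measurable fun x : Fin m → ℝ => prevCoord a x j := by
  unfold prevCoord
  split_ifs
  · exact measurable_pi_apply _
  · exact measurable_const

lemma measurable_lastC {m : ℕ} (a : ℝ) :
    Measurable fun x : Fin m → ℝ => lastC m a x := by
  unfold lastC
  split_ifs
  · exact measurable_pi_apply _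
  · exact measurable_const

lemma measurableSet_S {m : ℕ} (a b : ℝ) :
    MeasurableSet {x : Fin m → ℝ | (∀ i, prevCoord a x i < x i) ∧ lastC m a x < b} := by
  have h : {x : Fin m → ℝ | (∀ i, prevCoord a x i < x i) ∧ lastC m a x < b}
      = (⋂ i, {x : Fin m → ℝ | prevCoord a x i < x i}) ∩ {x : Fin m → ℝ | lastC m a x < b} := by
    ext x; simp [Set.mem_iInter]
  rw [h]
  exact (MeasurableSet.iInter fun i =>
      measurableSet_lt (measurable_prevCoord a i) (measurable_pi_apply i)).inter
    (measurableSet_lt (measurable_lastC a) measurable_const)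

lemma measurable_integrand {m : ℕ} (a b β : ℝ) (α : Fin m → ℝ) :
    Measurable fun x : Fin m → ℝ =>
      ENNReal.ofReal ((∏ j, (x j - prevCoord a x j) ^ (α j - 1)) * (b - lastC m a x) ^ (β - 1)) := by
  apply ENNReal.measurable_ofReal.comp
  apply Measurable.mul
  · exact Finset.measurable_prod _ fun j _ =>
      meas_rpow_const ((measurable_pi_apply j).sub (measurable_prevCoord a j)) _
  · exact meas_rpow_const (measurable_const.sub (measurable_lastC a)) _

theorem dirichlet_aux (m : ℕ) : ∀ (α : Fin m → ℝ), (∀ j, 0 < α j) → ∀ (β a b : ℝ), 0 < β → a < b →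
    (∫⁻ x in {x : Fin m → ℝ | (∀ i, prevCoord a x i < x i) ∧ lastC m a x < b},
      ENNReal.ofReal ((∏ j, (x j - prevCoord a x j) ^ (α j - 1)) * (b - lastC m a x) ^ (β - 1)))
    = ENNReal.ofReal ((b - a) ^ ((∑ j, α j) + β - 1) * (∏ j, Real.Gamma (α j)) * Real.Gamma β
        / Real.Gamma ((∑ j, α j) + β)) := by
  induction m with
  | zero =>
    intro α hα β a b hβ hab
    have hset : {x : Fin 0 → ℝ | (∀ i, prevCoord a x i < x i) ∧ lastC 0 a x < b} = Set.univ := by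
      ext x
      simp [lastC, hab]
    have hΓ : Real.Gamma β ≠ 0 := (Real.Gamma_pos_of_pos hβ).ne'
    have hvol : (volume : Measure (Fin 0 → ℝ)) Set.univ = 1 := by
      rw [MeasureTheory.volume_pi, MeasureTheory.Measure.pi_univ]
      simp
    rw [hset, MeasureTheory.Measure.restrict_univ]
    have hconst : ∀ x : Fin 0 → ℝ,
        ENNReal.ofReal ((∏ j, (x j - prevCoord a x j) ^ (α j - 1)) * (b - lastC 0 a x) ^ (β - 1))
          = ENNReal.ofReal ((b - a) ^ (β - 1)) := by
      intro x
      simp [lastC]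
    rw [lintegral_congr hconst, MeasureTheory.lintegral_const, hvol, mul_one]
    congr 1
    simp only [Finset.univ_eq_empty, Finset.sum_empty, Finset.prod_empty, zero_add, one_mul,
      mul_one]
    rw [mul_div_assoc, div_self hΓ, mul_one]
  | succ m ih =>
    intro α hα β a b hβ hab
    set p : ℝ := α (Fin.last m) with hp_def
    have hp : 0 < p := hα _
    set Bc : ℝ := Real.Gamma p * Real.Gamma β / Real.Gamma (p + β) with hBc_def
    have hBc0 : 0 ≤ Bc := by
      apply div_nonneg (mul_nonneg (Real.Gamma_pos_of_pos hp).le (Real.Gamma_pos_of_pos hβ).le)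
        (Real.Gamma_pos_of_pos (by linarith)).le
    set S : Set (Fin (m+1) → ℝ) :=
      {x | (∀ i, prevCoord a x i < x i) ∧ lastC (m+1) a x < b} with hS_def
    set F : (Fin (m+1) → ℝ) → ℝ≥0∞ := fun x =>
      ENNReal.ofReal ((∏ j, (x j - prevCoord a x j) ^ (α j - 1)) * (b - lastC (m+1) a x) ^ (β - 1))
      with hF_def
    have hSm : MeasurableSet S := measurableSet_S a b
    have hFm : Measurable F := measurable_integrand a b β α
    set Sm : Set (Fin m → ℝ) :=
      {y | (∀ i, prevCoord a y i < y i) ∧ lastC m a y < b} with hSm_def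
    have hSmm : MeasurableSet Sm := measurableSet_S a b
    set inner : (Fin m → ℝ) → ℝ≥0∞ := fun y =>
      ENNReal.ofReal ((∏ j, (y j - prevCoord a y j) ^ (α j.castSucc - 1))
        * (b - lastC m a y) ^ ((p + β) - 1)) with hinner_def
    have hinnerm : Measurable inner := measurable_integrand a b (p + β) (fun j => α j.castSucc)
    -- step 1: pass to the product space
    set e := MeasurableEquiv.piFinSuccAbove (fun _ : Fin (m+1) => ℝ) (Fin.last m) with he_def
    have hmp : MeasurePreserving e volume volume :=
      MeasureTheory.volume_preserving_piFinSuccAbove (fun _ : Fin (m+1) => ℝ) (Fin.last m)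
    have step1 : (∫⁻ x in S, F x) = ∫⁻ z, S.indicator F (e.symm z) ∂volume := by
      rw [← MeasureTheory.lintegral_indicator hSm]
      exact ((MeasureTheory.MeasurePreserving.symm e hmp).lintegral_comp (hFm.indicator hSm)).symm
    -- e.symm (t, y) = snoc y t
    have hesymm : ∀ (t : ℝ) (y : Fin m → ℝ),
        e.symm (t, y) = (Fin.snoc y t : Fin (m+1) → ℝ) := by
      intro t y
      rw [he_def]
      simp only [MeasurableEquiv.piFinSuccAbove_symm_apply]
      exact Fin.insertNth_last' t y
    -- step 2: Tonelli
    have step2 : (∫⁻ z, S.indicator F (e.symm z) ∂volume)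
        = ∫⁻ y, ∫⁻ t, S.indicator F (e.symm (t, y)) ∂volume ∂volume := by
      rw [MeasureTheory.Measure.volume_eq_prod]
      exact MeasureTheory.lintegral_prod_symm _
        (((hFm.indicator hSm).comp e.symm.measurable).aemeasurable)
    -- step 3: inner integral
    have step3 : ∀ y : Fin m → ℝ,
        (∫⁻ t, S.indicator F (e.symm (t, y)) ∂volume)
          = Sm.indicator (fun y => inner y * ENNReal.ofReal Bc) y := by
      intro y
      by_cases hy : (∀ i, prevCoord a y i < y i) ∧ lastC m a y < b
      · set c : ℝ := lastC m a y with hc_def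
        have hcb : c < b := hy.2
        set P : ℝ := ∏ j : Fin m, (y j - prevCoord a y j) ^ (α j.castSucc - 1) with hP_def
        have hP0 : 0 ≤ P :=
          Finset.prod_nonneg fun j _ => Real.rpow_nonneg (by linarith [hy.1 j]) _
        have hind : ∀ t : ℝ, S.indicator F (e.symm (t, y))
            = (Set.Ioo c b).indicator
                (fun t => ENNReal.ofReal P
                  * ENNReal.ofReal ((t - c) ^ (p - 1) * (b - t) ^ (β - 1))) t := by
          intro t
          rw [hesymm]
          by_cases ht : t ∈ Set.Ioo c b
          · rw [Set.indicator_of_mem ht, Set.indicator_of_mem]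
            · rw [hF_def]
              simp only
              rw [prod_snoc, lastC_snoc, ← hP_def, ← hc_def, ← hp_def,
                ← ENNReal.ofReal_mul hP0]
              congr 1
              ring
            · exact ⟨(cond_snoc a t y).mpr ⟨hy.1, ht.1⟩, by rw [lastC_snoc]; exact ht.2⟩
          · rw [Set.indicator_of_notMem ht, Set.indicator_of_notMem]
            intro hmem
            rw [hS_def] at hmem
            obtain ⟨h1, h2⟩ := hmem
            rw [lastC_snoc] at h2
            exact ht ⟨((cond_snoc a t y).mp h1).2, h2⟩
        have hySm : y ∈ Sm := hy
        rw [Set.indicator_of_mem hySm]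
        calc ∫⁻ t, S.indicator F (e.symm (t, y)) ∂volume
            = ∫⁻ t, (Set.Ioo c b).indicator
                (fun t => ENNReal.ofReal P
                  * ENNReal.ofReal ((t - c) ^ (p - 1) * (b - t) ^ (β - 1))) t ∂volume :=
              lintegral_congr hind
          _ = ∫⁻ t in Set.Ioo c b, ENNReal.ofReal P
                * ENNReal.ofReal ((t - c) ^ (p - 1) * (b - t) ^ (β - 1)) ∂volume :=
              MeasureTheory.lintegral_indicator measurableSet_Ioo _
          _ = ENNReal.ofReal P
                * ∫⁻ t in Set.Ioo c b, ENNReal.ofReal ((t - c) ^ (p - 1) * (b - t) ^ (β - 1))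
                  ∂volume := by
              rw [MeasureTheory.lintegral_const_mul]
              exact ENNReal.measurable_ofReal.comp
                ((meas_rpow_const (measurable_id.sub measurable_const) _).mul
                  (meas_rpow_const (measurable_const.sub measurable_id) _))
          _ = ENNReal.ofReal P * ENNReal.ofReal ((b - c) ^ (p + β - 1) * Bc) := by
              rw [betaLintegral hp hβ hcb]
          _ = inner y * ENNReal.ofReal Bc := by
              rw [hinner_def]
              simp only
              rw [← hP_def, ← hc_def,
                ENNReal.ofReal_mul (Real.rpow_nonneg (by linarith : (0:ℝ) ≤ b - c) _),
                ENNReal.ofReal_mul hP0, mul_assoc]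
      · have hval : ∀ t : ℝ, S.indicator F (e.symm (t, y)) = 0 := by
          intro t
          rw [hesymm, Set.indicator_of_notMem]
          intro hmem
          rw [hS_def] at hmem
          obtain ⟨h1, h2⟩ := hmem
          rw [lastC_snoc] at h2
          have := (cond_snoc a t y).mp h1
          exact hy ⟨this.1, lt_trans this.2 h2⟩
        have hySm : y ∉ Sm := hy
        rw [Set.indicator_of_notMem hySm]
        simp [hval]
    -- step 4: outer integral and induction hypothesis
    have step4 : (∫⁻ y, Sm.indicator (fun y => inner y * ENNReal.ofReal Bc) y ∂volume)
        = (∫⁻ y in Sm, inner y ∂volume) * ENNReal.ofReal Bc := by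
      rw [← MeasureTheory.lintegral_indicator hSmm]
      rw [← MeasureTheory.lintegral_mul_const _ (hinnerm.indicator hSmm)]
      congr 1
      ext y
      by_cases hy : y ∈ Sm
      · rw [Set.indicator_of_mem hy, Set.indicator_of_mem hy]
      · rw [Set.indicator_of_notMem hy, Set.indicator_of_notMem hy, zero_mul]
    have hihval := ih (fun j => α j.castSucc) (fun j => hα _) (p + β) a b (by linarith) hab
    -- assemble
    rw [step1, step2, lintegral_congr step3, step4, hihval]
    -- final arithmetic
    have hnnf : (0:ℝ) ≤ (b - a) ^ ((∑ j : Fin m, α j.castSucc) + (p + β) - 1)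
        * (∏ j : Fin m, Real.Gamma (α j.castSucc)) * Real.Gamma (p + β)
        / Real.Gamma ((∑ j : Fin m, α j.castSucc) + (p + β)) := by
      have hsum0 : (0:ℝ) ≤ ∑ j : Fin m, α j.castSucc :=
        Finset.sum_nonneg fun j _ => (hα _).le
      have h2' : 0 < Real.Gamma ((∑ j : Fin m, α j.castSucc) + (p + β)) :=
        Real.Gamma_pos_of_pos (by linarith)
      apply div_nonneg _ h2'.le
      exact mul_nonneg (mul_nonneg (Real.rpow_nonneg (by linarith) _)
        (Finset.prod_nonneg fun j _ => (Real.Gamma_pos_of_pos (hα _)).le))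
        (Real.Gamma_pos_of_pos (by linarith)).le
    rw [← ENNReal.ofReal_mul hnnf]
    congr 1
    have hsum : (∑ j : Fin (m+1), α j) = (∑ j : Fin m, α j.castSucc) + p :=
      Fin.sum_univ_castSucc α
    have hprod : (∏ j : Fin (m+1), Real.Gamma (α j))
        = (∏ j : Fin m, Real.Gamma (α j.castSucc)) * Real.Gamma p :=
      Fin.prod_univ_castSucc fun j => Real.Gamma (α j)
    rw [hsum, hprod, hBc_def]
    have h1 : Real.Gamma (p + β) ≠ 0 := (Real.Gamma_pos_of_pos (by linarith)).ne'
    have hsum0 : (0:ℝ) ≤ ∑ j : Fin m, α j.castSucc :=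
      Finset.sum_nonneg fun j _ => (hα _).le
    have h2 : Real.Gamma ((∑ j : Fin m, α j.castSucc) + p + β) ≠ 0 :=
      (Real.Gamma_pos_of_pos (by linarith)).ne'
    have hexp : (∑ j : Fin m, α j.castSucc) + (p + β) - 1
        = (∑ j : Fin m, α j.castSucc) + p + β - 1 := by ring
    have hexp2 : (∑ j : Fin m, α j.castSucc) + (p + β)
        = (∑ j : Fin m, α j.castSucc) + p + β := by ring
    rw [hexp, hexp2]
    field_simp

lemma cond_iff {k : ℕ} (a : ℝ) (x : Fin (k+1) → ℝ) :
    (∀ i, prevCoord a x i < x i) ↔ StrictMono x ∧ a < x ⟨0, Nat.succ_pos k⟩ := by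
  constructor
  · intro h
    constructor
    · rw [Fin.strictMono_iff_lt_succ]
      intro i
      have h2 := h i.succ
      rw [prevCoord, dif_pos (by simp : 0 < (i.succ : Fin (k+1)).val)] at h2
      have hidx : (⟨(i.succ : Fin (k+1)).val - 1,
          lt_of_le_of_lt (Nat.sub_le _ _) (i.succ : Fin (k+1)).isLt⟩ : Fin (k+1))
            = i.castSucc := Fin.ext (by simp)
      rwa [hidx] at h2
    · have h2 := h ⟨0, Nat.succ_pos k⟩
      rwa [prevCoord, dif_neg (by simp)] at h2
  · rintro ⟨hmono, h0⟩ i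
    rcases Nat.eq_zero_or_pos i.val with hz | hpos
    · rw [prevCoord, dif_neg (by omega)]
      have hi : i = ⟨0, Nat.succ_pos k⟩ := Fin.ext hz
      rwa [hi]
    · rw [prevCoord, dif_pos hpos]
      exact hmono (show (⟨i.val - 1, lt_of_le_of_lt (Nat.sub_le _ _) i.isLt⟩ : Fin (k+1)) < i
        from by rw [Fin.lt_def]; exact Nat.sub_lt hpos one_pos)

theorem stmt_3 (m : ℕ) (hm : 0 < m) (α : Fin m → ℝ) (hα : ∀ j, 0 < α j)
    (a b : ℝ) (hab : a < b) :
    (∫ x in {x : Fin m → ℝ | StrictMono x ∧ a < x ⟨0, hm⟩ ∧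
        x ⟨m - 1, Nat.sub_lt hm one_pos⟩ < b},
      ∏ j : Fin m, (x j - prevCoord a x j) ^ (α j - 1)) =
    (b - a) ^ (∑ j, α j) * (∏ j, Real.Gamma (α j)) / Real.Gamma ((∑ j, α j) + 1) := by
  obtain ⟨k, rfl⟩ : ∃ k, m = k + 1 := ⟨m - 1, (Nat.succ_pred_eq_of_pos hm).symm⟩
  have hsetEq : {x : Fin (k+1) → ℝ | StrictMono x ∧ a < x ⟨0, hm⟩ ∧
        x ⟨k + 1 - 1, Nat.sub_lt hm one_pos⟩ < b}
      = {x : Fin (k+1) → ℝ | (∀ i, prevCoord a x i < x i) ∧ lastC (k+1) a x < b} := by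
    ext x
    simp only [Set.mem_setOf_eq]
    rw [cond_iff a x, lastC, dif_pos (Nat.succ_pos k)]
    tauto
  rw [hsetEq]
  have hSmeas : MeasurableSet
      {x : Fin (k+1) → ℝ | (∀ i, prevCoord a x i < x i) ∧ lastC (k+1) a x < b} :=
    measurableSet_S a b
  have hfmeas : Measurable fun x : Fin (k+1) → ℝ =>
      ∏ j, (x j - prevCoord a x j) ^ (α j - 1) :=
    Finset.measurable_prod _ fun j _ =>
      meas_rpow_const ((measurable_pi_apply j).sub (measurable_prevCoord a j)) _
  rw [MeasureTheory.integral_eq_lintegral_of_nonneg_ae]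
  rotate_left
  · filter_upwards [MeasureTheory.ae_restrict_mem hSmeas] with x hx
    exact Finset.prod_nonneg fun j _ => Real.rpow_nonneg (by linarith [hx.1 j]) _
  · exact hfmeas.aestronglyMeasurable
  have hrw : (∫⁻ x in {x : Fin (k+1) → ℝ | (∀ i, prevCoord a x i < x i) ∧ lastC (k+1) a x < b},
        ENNReal.ofReal (∏ j, (x j - prevCoord a x j) ^ (α j - 1)))
      = ∫⁻ x in {x : Fin (k+1) → ℝ | (∀ i, prevCoord a x i < x i) ∧ lastC (k+1) a x < b},
        ENNReal.ofReal ((∏ j, (x j - prevCoord a x j) ^ (α j - 1))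
          * (b - lastC (k+1) a x) ^ ((1:ℝ) - 1)) := by
    apply lintegral_congr fun x => ?_
    rw [sub_self, Real.rpow_zero, mul_one]
  rw [hrw, dirichlet_aux (k+1) α hα 1 a b one_pos hab]
  have hsum0 : (0:ℝ) ≤ ∑ j, α j := Finset.sum_nonneg fun j _ => (hα _).le
  have hnn : (0:ℝ) ≤ (b - a) ^ ((∑ j, α j) + 1 - 1) * (∏ j, Real.Gamma (α j))
      * Real.Gamma 1 / Real.Gamma ((∑ j, α j) + 1) := by
    apply div_nonneg _ (Real.Gamma_pos_of_pos (by linarith)).le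
    exact mul_nonneg (mul_nonneg (Real.rpow_nonneg (by linarith) _)
      (Finset.prod_nonneg fun j _ => (Real.Gamma_pos_of_pos (hα _)).le))
      (Real.Gamma_pos_of_pos one_pos).le
  rw [ENNReal.toReal_ofReal hnn, Real.Gamma_one, mul_one,
    show (∑ j, α j) + 1 - 1 = ∑ j, α j from by ring]
end

section
/- Let S_m be defined for m ≥ 1 by S_m = ∑_σ ∏_{i=1}^m (N_i(σ))!, where the sum is over all functions σ : {1,…,m} → {1,…,m} satisfying σ(j) ≤ j for all j, and N_i(σ) = #{j : σ(j) = i}. Then S_m = (2m - 1)!! (the double factorial of odd numbers), and in particular S_m ≤ 2^m · m!. -/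
open Finset Nat

private def Pfun {n : ℕ} (σ : Fin n → Fin n) : ℕ :=
  ∏ i : Fin n, (Finset.univ.filter (fun j => σ j = i)).card !

private def Sfun (n : ℕ) : ℕ :=
  ∑ σ ∈ Finset.univ.filter (fun σ : Fin n → Fin n => ∀ j, σ j ≤ j), Pfun σ

private def extFun {m : ℕ} (σ' : Fin m → Fin m) (i : Fin (m + 1)) :
    Fin (m + 1) → Fin (m + 1) :=
  Fin.snoc (fun j => (σ' j).castSucc) i

private lemma nsum {m : ℕ} (σ' : Fin m → Fin m) :
    (∑ k : Fin m, (Finset.univ.filter (fun j => σ' j = k)).card) = m := by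
  have := Finset.card_eq_sum_card_fiberwise
    (f := σ') (s := (Finset.univ : Finset (Fin m))) (t := Finset.univ)
    (fun x _ => Finset.mem_univ _)
  simpa using this.symm

private lemma fiber_card {m : ℕ} (σ' : Fin m → Fin m) (i : Fin (m + 1)) (k : Fin (m + 1)) :
    (Finset.univ.filter (fun j => extFun σ' i j = k)).card =
      (∑ j' : Fin m, if (σ' j').castSucc = k then 1 else 0) + (if i = k then 1 else 0) := by
  rw [Finset.card_filter]
  rw [Fin.sum_univ_castSucc (f := fun j => if extFun σ' i j = k then 1 else 0)]
  simp [extFun, Fin.snoc_castSucc, Fin.snoc_last]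

private lemma key (m : ℕ) (σ' : Fin m → Fin m) :
    (∑ i : Fin (m + 1), Pfun (extFun σ' i)) = (2 * m + 1) * Pfun σ' := by
  classical
  have hP : ∀ i : Fin (m + 1), Pfun (extFun σ' i) =
      (∏ k : Fin m, ((Finset.univ.filter (fun j => σ' j = k)).card
          + (if i = k.castSucc then 1 else 0)) !) * (if i = Fin.last m then 1 else 0) ! := by
    intro i
    unfold Pfun
    rw [Fin.prod_univ_castSucc
      (f := fun k => (Finset.univ.filter (fun j => extFun σ' i j = k)).card !)]
    congr 1
    · apply Finset.prod_congr rfl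
      intro k _
      congr 1
      rw [fiber_card]
      congr 1
      · rw [Finset.card_filter]
        apply Finset.sum_congr rfl
        intro j' _
        simp [Fin.castSucc_inj]
    · congr 1
      rw [fiber_card]
      have : ∀ j' : Fin m, ((σ' j').castSucc = Fin.last m) = False := by
        intro j'; simp [Fin.ext_iff]; omega
      simp [this]
  rw [Fin.sum_univ_castSucc (f := fun i => Pfun (extFun σ' i))]
  have hlast : Pfun (extFun σ' (Fin.last m)) = Pfun σ' := by
    rw [hP]
    have h1 : ∀ k : Fin m, (Fin.last m = k.castSucc) = False := by
      intro k; simp [Fin.ext_iff]; omega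
    simp [h1, Pfun]
  have hcs : ∀ i₀ : Fin m, Pfun (extFun σ' i₀.castSucc) =
      ((Finset.univ.filter (fun j => σ' j = i₀)).card + 1) * Pfun σ' := by
    intro i₀
    rw [hP]
    have h1 : (Fin.last m = Fin.castSucc i₀) = False := by
      simp [Fin.ext_iff]; omega
    have h2 : ∀ k : Fin m, (Fin.castSucc i₀ = Fin.castSucc k) = (i₀ = k) := by
      intro k; simp [Fin.castSucc_inj]
    simp only [h2, eq_comm (a := Fin.last m)] at *
    rw [show (if Fin.castSucc i₀ = Fin.last m then 1 else 0) = 0 by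
      simp [Fin.ext_iff]; omega]
    have : ∀ k : Fin m, ((Finset.univ.filter (fun j => σ' j = k)).card
          + (if i₀ = k then 1 else 0)) !
        = (Finset.univ.filter (fun j => σ' j = k)).card !
          * (if i₀ = k then (Finset.univ.filter (fun j => σ' j = k)).card + 1 else 1) := by
      intro k
      by_cases h : i₀ = k <;> simp [h, Nat.factorial_succ, Nat.mul_comm]
    simp only [this]
    rw [Finset.prod_mul_distrib]
    rw [Finset.prod_ite_eq (Finset.univ) i₀
      (fun k => (Finset.univ.filter (fun j => σ' j = k)).card + 1)]
    simp [Pfun, Nat.mul_comm]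
  rw [hlast]
  simp only [hcs]
  rw [← Finset.sum_mul, Finset.sum_add_distrib, nsum]
  simp
  ring

private def restr {m : ℕ} (σ : Fin (m + 1) → Fin (m + 1)) (j : Fin m) : Fin m :=
  ⟨min (σ j.castSucc : ℕ) (j : ℕ), lt_of_le_of_lt (min_le_right _ _) j.isLt⟩

private lemma step (m : ℕ) : Sfun (m + 1) = (2 * m + 1) * Sfun m := by
  classical
  unfold Sfun
  have hbij : (∑ σ ∈ Finset.univ.filter
        (fun σ : Fin (m+1) → Fin (m+1) => ∀ j, σ j ≤ j), Pfun σ)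
      = ∑ p ∈ ((Finset.univ.filter
          (fun σ : Fin m → Fin m => ∀ j, σ j ≤ j)) ×ˢ (Finset.univ : Finset (Fin (m+1)))),
          Pfun (extFun p.1 p.2) := by
    have left_inv : ∀ σ ∈ Finset.univ.filter
        (fun σ : Fin (m+1) → Fin (m+1) => ∀ j, σ j ≤ j),
        extFun (restr σ) (σ (Fin.last m)) = σ := by
      intro σ hσ
      rw [Finset.mem_filter] at hσ
      funext j
      induction j using Fin.lastCases with
      | last => simp [extFun]
      | cast j =>
        have h1 : (σ j.castSucc : ℕ) ≤ (j : ℕ) := by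
          have := hσ.2 j.castSucc
          simpa [Fin.le_def] using this
        simp only [extFun, Fin.snoc_castSucc]
        rw [Fin.ext_iff]
        simp [restr, Nat.min_eq_left h1]
    apply Finset.sum_nbij' (i := fun σ => (restr σ, σ (Fin.last m)))
      (j := fun p => extFun p.1 p.2)
    · intro σ _
      rw [Finset.mem_product, Finset.mem_filter]
      refine ⟨⟨Finset.mem_univ _, fun j => ?_⟩, Finset.mem_univ _⟩
      rw [Fin.le_def]
      exact min_le_right _ _
    · intro p hp
      rw [Finset.mem_product, Finset.mem_filter] at hp
      rw [Finset.mem_filter]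
      refine ⟨Finset.mem_univ _, fun j => ?_⟩
      induction j using Fin.lastCases with
      | last => exact Fin.le_last _
      | cast j =>
        simp only [extFun, Fin.snoc_castSucc]
        exact Fin.castSucc_le_castSucc_iff.mpr (hp.1.2 j)
    · exact left_inv
    · intro p hp
      rw [Finset.mem_product, Finset.mem_filter] at hp
      have h1 : restr (extFun p.1 p.2) = p.1 := by
        funext j
        have hle : (p.1 j : ℕ) ≤ (j : ℕ) := hp.1.2 j
        rw [Fin.ext_iff]
        simp [restr, extFun, Fin.snoc_castSucc, Nat.min_eq_left hle]
      have h2 : extFun p.1 p.2 (Fin.last m) = p.2 := by simp [extFun]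
      rw [h1, h2]
    · intro σ hσ
      rw [left_inv σ hσ]
  rw [hbij, Finset.sum_product]
  rw [Finset.mul_sum]
  apply Finset.sum_congr rfl
  intro σ' _
  exact key m σ'

private lemma Sfun_eq (n : ℕ) : Sfun (n + 1) = Nat.doubleFactorial (2 * (n + 1) - 1) := by
  induction n with
  | zero =>
    show Sfun 1 = 1
    decide
  | succ n ih =>
    rw [step, ih]
    have h1 : 2 * (n + 2) - 1 = (2 * (n + 1) - 1) + 2 := by omega
    rw [h1, Nat.doubleFactorial_add_two]
    congr 1

private lemma df_le (n : ℕ) : Nat.doubleFactorial (2 * n + 1) ≤ 2 ^ (n + 1) * (n + 1)! := by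
  induction n with
  | zero => simp [Nat.doubleFactorial]
  | succ n ih =>
    have h1 : 2 * (n + 1) + 1 = (2 * n + 1) + 2 := by omega
    rw [h1, Nat.doubleFactorial_add_two]
    calc (2 * n + 1 + 2) * Nat.doubleFactorial (2 * n + 1)
        ≤ (2 * (n + 2)) * (2 ^ (n + 1) * (n + 1)!) := by
          apply Nat.mul_le_mul _ ih; omega
      _ = 2 ^ (n + 1 + 1) * (n + 1 + 1)! := by
          rw [Nat.factorial_succ (n+1)]; ring

theorem stmt_4 (m : ℕ) (hm : 1 ≤ m) :
    (∑ σ ∈ Finset.univ.filter (fun σ : Fin m → Fin m => ∀ j, σ j ≤ j),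
        ∏ i : Fin m, (Finset.univ.filter (fun j => σ j = i)).card !) =
      Nat.doubleFactorial (2 * m - 1) ∧
    (∑ σ ∈ Finset.univ.filter (fun σ : Fin m → Fin m => ∀ j, σ j ≤ j),
        ∏ i : Fin m, (Finset.univ.filter (fun j => σ j = i)).card !) ≤ 2 ^ m * m ! := by
  cases m with
  | zero => omega
  | succ n =>
    have hS : (∑ σ ∈ Finset.univ.filter
          (fun σ : Fin (n+1) → Fin (n+1) => ∀ j, σ j ≤ j),
        ∏ i : Fin (n+1), (Finset.univ.filter (fun j => σ j = i)).card !) = Sfun (n+1) := rfl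
    rw [hS, Sfun_eq]
    refine ⟨rfl, ?_⟩
    calc Nat.doubleFactorial (2 * (n + 1) - 1)
        = Nat.doubleFactorial (2 * n + 1) := by congr 1
      _ ≤ 2 ^ (n + 1) * (n + 1)! := df_le n
end
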